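/- For any two distinct non-vertex points p and q of the weighted projective plane P(1,1,2) (distinct meaning their representatives (x₀,y₀,z₀) and (x₁,y₁,z₁) are not related by (x₁,y₁,z₁) = (λx₀,λy₀,λ²z₀) for any λ ∈ ℂ*), the set of forms f ∈ W singular at both p and q is a complex linear subspace of W of dimension 10 (codimension 6). -/

import Mathlib

open MvPolynomial

noncomputable section

/-- The polynomial ring `ℂ[x, y, z]`, with variables indexed by `Fin 3`:
`x = X 0`, `y = X 1`, `z = X 2`. -/
abbrev P3 : Type := MvPolynomial (Fin 3) ℂ

/-- The weights `wt(x) = wt(y) = 1`, `wt(z) = 2`. -/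
def w112 : Fin 3 → ℕ := ![1, 1, 2]

/-- The space `W` of weighted homogeneous polynomials of weighted degree `6`. -/
def W6 : Submodule ℂ P3 := weightedHomogeneousSubmodule ℂ w112 6

/-- A form `f` is singular at the point of the cone `P(1,1,2)` with representative `p ∈ ℂ³`
if the three partial derivatives of `f` all vanish at `p`. -/
def SingAt (f : P3) (p : Fin 3 → ℂ) : Prop :=
  ∀ i : Fin 3, eval p (pderiv i f) = 0

/-! ### Auxiliary material -/

/-- The linear functional `f ↦ ∂f/∂xᵢ (r)`. -/
def D (r : Fin 3 → ℂ) (i : Fin 3) (f : P3) : ℂ := eval r (pderiv i f)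

lemma D_sum (r : Fin 3 → ℂ) (i : Fin 3) (a : Fin 3 → ℂ) (g : Fin 3 → P3) :
    D r i (∑ k, a k • g k) = ∑ k, a k * D r i (g k) := by
  simp [D, smul_eq_C_mul, pderiv_C_mul]

/-- Bundled version of `D`. -/
def Dlin (r : Fin 3 → ℂ) (i : Fin 3) : P3 →ₗ[ℂ] ℂ where
  toFun := D r i
  map_add' f g := by simp [D]
  map_smul' c f := by simp [D, smul_eq_C_mul, pderiv_C_mul]

/-- The gradient-evaluation map at `r`. -/
def Dgrad (r : Fin 3 → ℂ) : P3 →ₗ[ℂ] (Fin 3 → ℂ) := LinearMap.pi fun i => Dlin r i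

lemma span_lemma (p q : Fin 3 → ℂ) (g : Fin 3 → P3)
    (hg : ∀ k, g k ∈ W6) (hz : ∀ k i, D q i (g k) = 0)
    (hdet : (Matrix.of fun k i => D p i (g k)).det ≠ 0) (u : Fin 3 → ℂ) :
    ∃ f ∈ W6, (∀ i, D p i f = u i) ∧ (∀ i, D q i f = 0) := by
  obtain ⟨a, ha⟩ := (Matrix.vecMul_surjective_iff_isUnit.2
    ((Matrix.isUnit_iff_isUnit_det _).2 (isUnit_iff_ne_zero.2 hdet))) u
  refine ⟨∑ k, a k • g k, Submodule.sum_mem _ fun k _ => Submodule.smul_mem _ _ (hg k), ?_, ?_⟩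
  · intro i
    have h2 := congr_fun ha i
    simp only [Matrix.vecMul, dotProduct, Matrix.of_apply] at h2
    rw [D_sum, ← h2]
  · intro i
    rw [D_sum]
    simp [hz]

lemma eval_pderiv_zero (r : Fin 3 → ℂ) (g h : P3) (m : ℕ) (hm : m - 1 ≠ 0)
    (hg : eval r g = 0) (i : Fin 3) : eval r (pderiv i (g ^ m * h)) = 0 := by
  rw [pderiv_mul, pderiv_pow]
  simp [hg, zero_pow hm, zero_pow (by omega : m ≠ 0)]

lemma Hmul {f g : P3} {n m k : ℕ} (hf : f.IsWeightedHomogeneous w112 n)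
    (hg : g.IsWeightedHomogeneous w112 m) (h : n + m = k) :
    (f * g).IsWeightedHomogeneous w112 k := h ▸ hf.mul hg

lemma Hpow {f : P3} {n k m : ℕ} (hf : f.IsWeightedHomogeneous w112 n) (h : k * n = m) :
    (f ^ k).IsWeightedHomogeneous w112 m := by
  subst h
  induction k with
  | zero => simpa using isWeightedHomogeneous_one ℂ w112
  | succ k ih => rw [pow_succ]; exact Hmul ih hf (by ring)

lemma H_X0 : (X 0 : P3).IsWeightedHomogeneous w112 1 := by
  simpa [w112] using isWeightedHomogeneous_X ℂ w112 0
lemma H_X1 : (X 1 : P3).IsWeightedHomogeneous w112 1 := by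
  simpa [w112] using isWeightedHomogeneous_X ℂ w112 1
lemma H_X2 : (X 2 : P3).IsWeightedHomogeneous w112 2 := by
  simpa [w112] using isWeightedHomogeneous_X ℂ w112 2
lemma H_lin (a b : ℂ) : (C a * X 0 - C b * X 1 : P3).IsWeightedHomogeneous w112 1 :=
  (weightedHomogeneousSubmodule ℂ w112 1).sub_mem
    (Hmul (isWeightedHomogeneous_C w112 a) H_X0 (by norm_num))
    (Hmul (isWeightedHomogeneous_C w112 b) H_X1 (by norm_num))
lemma H_quad0 (a b : ℂ) : (C a * X 2 - C b * X 0 ^ 2 : P3).IsWeightedHomogeneous w112 2 :=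
  (weightedHomogeneousSubmodule ℂ w112 2).sub_mem
    (Hmul (isWeightedHomogeneous_C w112 a) H_X2 (by norm_num))
    (Hmul (isWeightedHomogeneous_C w112 b) (Hpow H_X0 rfl) (by norm_num))
lemma H_quad1 (a b : ℂ) : (C a * X 2 - C b * X 1 ^ 2 : P3).IsWeightedHomogeneous w112 2 :=
  (weightedHomogeneousSubmodule ℂ w112 2).sub_mem
    (Hmul (isWeightedHomogeneous_C w112 a) H_X2 (by norm_num))
    (Hmul (isWeightedHomogeneous_C w112 b) (Hpow H_X1 rfl) (by norm_num))

/-! ### The four families of generators -/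

lemma famA0 (a b : ℂ) (r s : Fin 3 → ℂ) (hr : a * r 0 - b * r 1 = 0)
    (hc : a * s 0 - b * s 1 ≠ 0) (hb : b ≠ 0) (u : Fin 3 → ℂ) :
    ∃ f ∈ W6, (∀ i, D s i f = u i) ∧ (∀ i, D r i f = 0) := by
  set l : P3 := C a * X 0 - C b * X 1 with hl
  have hle : eval r l = 0 := by simp [hl]; linear_combination hr
  apply span_lemma s r ![l ^ 6 * 1, l ^ 5 * X 0, l ^ 4 * X 2]
  · intro k
    fin_cases k
    · exact Hmul (Hpow (H_lin a b) rfl) (isWeightedHomogeneous_one ℂ w112) (by norm_num)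
    · exact Hmul (Hpow (H_lin a b) rfl) H_X0 (by norm_num)
    · exact Hmul (Hpow (H_lin a b) rfl) H_X2 (by norm_num)
  · intro k i
    fin_cases k <;> exact eval_pderiv_zero r l _ _ (by norm_num) hle i
  · have hd : (Matrix.of fun k i => D s i (![l ^ 6 * 1, l ^ 5 * X 0, l ^ 4 * X 2] k)).det
        = 6 * b * (a * s 0 - b * s 1) ^ 14 := by
      rw [Matrix.det_fin_three]
      simp [D, hl, pderiv_pow, pderiv_X]
      ring
    rw [hd]
    exact mul_ne_zero (mul_ne_zero (by norm_num) hb) (pow_ne_zero _ hc)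

lemma famA1 (a b : ℂ) (r s : Fin 3 → ℂ) (hr : a * r 0 - b * r 1 = 0)
    (hc : a * s 0 - b * s 1 ≠ 0) (ha : a ≠ 0) (u : Fin 3 → ℂ) :
    ∃ f ∈ W6, (∀ i, D s i f = u i) ∧ (∀ i, D r i f = 0) := by
  set l : P3 := C a * X 0 - C b * X 1 with hl
  have hle : eval r l = 0 := by simp [hl]; linear_combination hr
  apply span_lemma s r ![l ^ 6 * 1, l ^ 5 * X 1, l ^ 4 * X 2]
  · intro k
    fin_cases k
    · exact Hmul (Hpow (H_lin a b) rfl) (isWeightedHomogeneous_one ℂ w112) (by norm_num)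
    · exact Hmul (Hpow (H_lin a b) rfl) H_X1 (by norm_num)
    · exact Hmul (Hpow (H_lin a b) rfl) H_X2 (by norm_num)
  · intro k i
    fin_cases k <;> exact eval_pderiv_zero r l _ _ (by norm_num) hle i
  · have hd : (Matrix.of fun k i => D s i (![l ^ 6 * 1, l ^ 5 * X 1, l ^ 4 * X 2] k)).det
        = 6 * a * (a * s 0 - b * s 1) ^ 14 := by
      rw [Matrix.det_fin_three]
      simp [D, hl, pderiv_pow, pderiv_X]
      ring
    rw [hd]
    exact mul_ne_zero (mul_ne_zero (by norm_num) ha) (pow_ne_zero _ hc)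

lemma famB0 (a b : ℂ) (r s : Fin 3 → ℂ) (hr : a * r 2 - b * r 0 ^ 2 = 0)
    (hc : a * s 2 - b * s 0 ^ 2 ≠ 0) (ha : a ≠ 0) (hs0 : s 0 ≠ 0) (u : Fin 3 → ℂ) :
    ∃ f ∈ W6, (∀ i, D s i f = u i) ∧ (∀ i, D r i f = 0) := by
  set Q : P3 := C a * X 2 - C b * X 0 ^ 2 with hQ
  have hQe : eval r Q = 0 := by simp [hQ]; linear_combination hr
  apply span_lemma s r ![Q ^ 3 * 1, Q ^ 2 * X 0 ^ 2, Q ^ 2 * (X 0 * X 1)]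
  · intro k
    fin_cases k
    · exact Hmul (Hpow (H_quad0 a b) rfl) (isWeightedHomogeneous_one ℂ w112) (by norm_num)
    · exact Hmul (Hpow (H_quad0 a b) rfl) (Hpow H_X0 rfl) (by norm_num)
    · exact Hmul (Hpow (H_quad0 a b) rfl) (Hmul H_X0 H_X1 rfl) (by norm_num)
  · intro k i
    fin_cases k <;> exact eval_pderiv_zero r Q _ _ (by norm_num) hQe i
  · have hd : (Matrix.of fun k i =>
        D s i (![Q ^ 3 * 1, Q ^ 2 * X 0 ^ 2, Q ^ 2 * (X 0 * X 1)] k)).det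
        = 6 * a * s 0 ^ 2 * (a * s 2 - b * s 0 ^ 2) ^ 6 := by
      rw [Matrix.det_fin_three]
      simp [D, hQ, pderiv_pow, pderiv_X]
      ring
    rw [hd]
    exact mul_ne_zero (mul_ne_zero (mul_ne_zero (by norm_num) ha) (pow_ne_zero _ hs0))
      (pow_ne_zero _ hc)

lemma famB1 (a b : ℂ) (r s : Fin 3 → ℂ) (hr : a * r 2 - b * r 1 ^ 2 = 0)
    (hc : a * s 2 - b * s 1 ^ 2 ≠ 0) (ha : a ≠ 0) (hs1 : s 1 ≠ 0) (u : Fin 3 → ℂ) :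
    ∃ f ∈ W6, (∀ i, D s i f = u i) ∧ (∀ i, D r i f = 0) := by
  set Q : P3 := C a * X 2 - C b * X 1 ^ 2 with hQ
  have hQe : eval r Q = 0 := by simp [hQ]; linear_combination hr
  apply span_lemma s r ![Q ^ 3 * 1, Q ^ 2 * X 1 ^ 2, Q ^ 2 * (X 0 * X 1)]
  · intro k
    fin_cases k
    · exact Hmul (Hpow (H_quad1 a b) rfl) (isWeightedHomogeneous_one ℂ w112) (by norm_num)
    · exact Hmul (Hpow (H_quad1 a b) rfl) (Hpow H_X1 rfl) (by norm_num)
    · exact Hmul (Hpow (H_quad1 a b) rfl) (Hmul H_X0 H_X1 rfl) (by norm_num)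
  · intro k i
    fin_cases k <;> exact eval_pderiv_zero r Q _ _ (by norm_num) hQe i
  · have hd : (Matrix.of fun k i =>
        D s i (![Q ^ 3 * 1, Q ^ 2 * X 1 ^ 2, Q ^ 2 * (X 0 * X 1)] k)).det
        = -(6 * a * s 1 ^ 2 * (a * s 2 - b * s 1 ^ 2) ^ 6) := by
      rw [Matrix.det_fin_three]
      simp [D, hQ, pderiv_pow, pderiv_X]
      ring
    rw [hd]
    exact neg_ne_zero.2 (mul_ne_zero (mul_ne_zero (mul_ne_zero (by norm_num) ha)
      (pow_ne_zero _ hs1)) (pow_ne_zero _ hc))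

/-! ### Dimension of `W6` -/

lemma weight_w112 (d : Fin 3 →₀ ℕ) : Finsupp.weight w112 d = d 0 + d 1 + 2 * d 2 := by
  rw [Finsupp.weight_apply, Finsupp.sum_fintype]
  · simp [Fin.sum_univ_three, w112]; ring
  · intro i; exact zero_smul _ _

def T16 : Finset (Fin 3 →₀ ℕ) :=
  ((Finset.range 7 ×ˢ Finset.range 7 ×ˢ Finset.range 4).filter
      fun t => t.1 + t.2.1 + 2 * t.2.2 = 6).image
    fun t => Finsupp.equivFunOnFinite.symm ![t.1, t.2.1, t.2.2]

lemma card_T16 : T16.card = 16 := by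
  rw [T16, Finset.card_image_of_injective _ ?_]
  · decide
  · intro s t h
    have h' := congrArg Finsupp.equivFunOnFinite h
    simp only [Equiv.apply_symm_apply] at h'
    have h0 := congr_fun h' 0
    have h1 := congr_fun h' 1
    have h2 := congr_fun h' 2
    simp only [Matrix.cons_val_zero, Matrix.cons_val_one, Matrix.head_cons,
      Matrix.cons_val_two, Matrix.tail_cons] at h0 h1 h2
    exact Prod.ext h0 (Prod.ext h1 h2)

lemma set_T16 : {d : Fin 3 →₀ ℕ | Finsupp.weight w112 d = 6} = ↑T16 := by
  ext d
  simp only [Set.mem_setOf_eq, Finset.coe_image, Set.mem_image, Finset.mem_coe,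
    Finset.mem_filter, Finset.mem_product, Finset.mem_range, T16, weight_w112]
  constructor
  · intro h
    refine ⟨(d 0, d 1, d 2), ⟨⟨?_, ?_, ?_⟩, ?_⟩, ?_⟩
    · show d 0 < 7; omega
    · show d 1 < 7; omega
    · show d 2 < 4; omega
    · show d 0 + d 1 + 2 * d 2 = 6; omega
    · apply Finsupp.equivFunOnFinite.symm_apply_eq.2
      ext i
      fin_cases i <;> simp
  · rintro ⟨t, ⟨_, ht⟩, rfl⟩
    simpa using ht

lemma W6_eq_supported :
    W6 = AddMonoidAlgebra.supported ℂ ℂ ((↑T16 : Set (Fin 3 →₀ ℕ))) := by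
  rw [show W6 = AddMonoidAlgebra.supported ℂ ℂ {d : Fin 3 →₀ ℕ | Finsupp.weight w112 d = 6} from
    weightedHomogeneousSubmodule_eq_finsupp_supported ℂ w112 6, set_T16]

instance : FiniteDimensional ℂ W6 := by
  rw [W6_eq_supported]
  exact Module.Finite.equiv (AddMonoidAlgebra.supportedEquivFinsupp (↑T16 : Set (Fin 3 →₀ ℕ))).symm

lemma finrank_W6 : Module.finrank ℂ W6 = 16 := by
  rw [W6_eq_supported,
    (AddMonoidAlgebra.supportedEquivFinsupp (↑T16 : Set (Fin 3 →₀ ℕ))).finrank_eq,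
    Module.finrank_finsupp_self]
  simp [card_T16]

/-! ### The main theorem -/

theorem cone_singular_at_two_points_codim_six
    (p q : Fin 3 → ℂ) (hp : ¬(p 0 = 0 ∧ p 1 = 0)) (hq : ¬(q 0 = 0 ∧ q 1 = 0))
    (hpq : ¬ ∃ l : ℂ, l ≠ 0 ∧ q 0 = l * p 0 ∧ q 1 = l * p 1 ∧ q 2 = l ^ 2 * p 2) :
    ∃ S : Submodule ℂ P3,
      (S : Set P3) = {f : P3 | f ∈ W6 ∧ SingAt f p ∧ SingAt f q} ∧
      Module.finrank ℂ S = 10 := by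
  have claimP : ∀ u : Fin 3 → ℂ, ∃ f ∈ W6, (∀ i, D p i f = u i) ∧ (∀ i, D q i f = 0) := by
    by_cases hcase : q 1 * p 0 - q 0 * p 1 = 0
    · by_cases hp0 : p 0 = 0
      · have hp1 : p 1 ≠ 0 := fun h => hp ⟨hp0, h⟩
        have hq0 : q 0 = 0 := by
          have hqp : q 0 * p 1 = 0 := by linear_combination -hcase + q 1 * hp0
          rcases mul_eq_zero.1 hqp with h | h
          · exact h
          · exact absurd h hp1
        have hq1 : q 1 ≠ 0 := fun h => hq ⟨hq0, h⟩
        have hK : q 1 ^ 2 * p 2 - q 2 * p 1 ^ 2 ≠ 0 := by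
          intro hK0
          refine hpq ⟨q 1 / p 1, div_ne_zero hq1 hp1, by rw [hp0, hq0]; ring, ?_, ?_⟩
          · rw [div_mul_cancel₀ _ hp1]
          · rw [div_pow, div_mul_eq_mul_div, eq_div_iff (pow_ne_zero _ hp1)]
            linear_combination -hK0
        exact fun u => famB1 (q 1 ^ 2) (q 2) q p (by ring)
          (fun h => hK (by linear_combination h)) (pow_ne_zero _ hq1) hp1 u
      · have hq0 : q 0 ≠ 0 := by
          intro h
          apply hq
          refine ⟨h, ?_⟩
          have hqp : q 1 * p 0 = 0 := by linear_combination hcase + p 1 * h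
          rcases mul_eq_zero.1 hqp with h' | h'
          · exact h'
          · exact absurd h' hp0
        have hK : q 0 ^ 2 * p 2 - q 2 * p 0 ^ 2 ≠ 0 := by
          intro hK0
          refine hpq ⟨q 0 / p 0, div_ne_zero hq0 hp0, ?_, ?_, ?_⟩
          · rw [div_mul_cancel₀ _ hp0]
          · rw [div_mul_eq_mul_div, eq_div_iff hp0]
            linear_combination hcase
          · rw [div_pow, div_mul_eq_mul_div, eq_div_iff (pow_ne_zero _ hp0)]
            linear_combination -hK0
        exact fun u => famB0 (q 0 ^ 2) (q 2) q p (by ring)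
          (fun h => hK (by linear_combination h)) (pow_ne_zero _ hq0) hp0 u
    · by_cases hq0 : q 0 = 0
      · have hq1 : q 1 ≠ 0 := fun h => hq ⟨hq0, h⟩
        exact fun u => famA1 (q 1) (q 0) q p (by ring)
          (fun h => hcase (by linear_combination h)) hq1 u
      · exact fun u => famA0 (q 1) (q 0) q p (by ring)
          (fun h => hcase (by linear_combination h)) hq0 u
  have claimQ : ∀ v : Fin 3 → ℂ, ∃ f ∈ W6, (∀ i, D q i f = v i) ∧ (∀ i, D p i f = 0) := by
    by_cases hcase : q 1 * p 0 - q 0 * p 1 = 0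
    · by_cases hp0 : p 0 = 0
      · have hp1 : p 1 ≠ 0 := fun h => hp ⟨hp0, h⟩
        have hq0 : q 0 = 0 := by
          have hqp : q 0 * p 1 = 0 := by linear_combination -hcase + q 1 * hp0
          rcases mul_eq_zero.1 hqp with h | h
          · exact h
          · exact absurd h hp1
        have hq1 : q 1 ≠ 0 := fun h => hq ⟨hq0, h⟩
        have hK : q 1 ^ 2 * p 2 - q 2 * p 1 ^ 2 ≠ 0 := by
          intro hK0
          refine hpq ⟨q 1 / p 1, div_ne_zero hq1 hp1, by rw [hp0, hq0]; ring, ?_, ?_⟩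
          · rw [div_mul_cancel₀ _ hp1]
          · rw [div_pow, div_mul_eq_mul_div, eq_div_iff (pow_ne_zero _ hp1)]
            linear_combination -hK0
        exact fun v => famB1 (p 1 ^ 2) (p 2) p q (by ring)
          (fun h => hK (by linear_combination -h)) (pow_ne_zero _ hp1) hq1 v
      · have hq0 : q 0 ≠ 0 := by
          intro h
          apply hq
          refine ⟨h, ?_⟩
          have hqp : q 1 * p 0 = 0 := by linear_combination hcase + p 1 * h
          rcases mul_eq_zero.1 hqp with h' | h'
          · exact h'
          · exact absurd h' hp0
        have hK : q 0 ^ 2 * p 2 - q 2 * p 0 ^ 2 ≠ 0 := by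
          intro hK0
          refine hpq ⟨q 0 / p 0, div_ne_zero hq0 hp0, ?_, ?_, ?_⟩
          · rw [div_mul_cancel₀ _ hp0]
          · rw [div_mul_eq_mul_div, eq_div_iff hp0]
            linear_combination hcase
          · rw [div_pow, div_mul_eq_mul_div, eq_div_iff (pow_ne_zero _ hp0)]
            linear_combination -hK0
        exact fun v => famB0 (p 0 ^ 2) (p 2) p q (by ring)
          (fun h => hK (by linear_combination -h)) (pow_ne_zero _ hp0) hq0 v
    · by_cases hp0 : p 0 = 0
      · have hp1 : p 1 ≠ 0 := fun h => hp ⟨hp0, h⟩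
        exact fun v => famA1 (p 1) (p 0) p q (by ring)
          (fun h => hcase (by linear_combination -h)) hp1 v
      · exact fun v => famA0 (p 1) (p 0) p q (by ring)
          (fun h => hcase (by linear_combination -h)) hp0 v
  -- the linear map on W6 recording both gradients
  set L : W6 →ₗ[ℂ] (Fin 3 → ℂ) × (Fin 3 → ℂ) :=
    ((Dgrad p).prod (Dgrad q)).comp W6.subtype with hL
  have hsurj : Function.Surjective L := by
    rintro ⟨u, v⟩
    obtain ⟨f1, hf1W, hf1p, hf1q⟩ := claimP u
    obtain ⟨f2, hf2W, hf2q, hf2p⟩ := claimQ v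
    refine ⟨⟨f1 + f2, W6.add_mem hf1W hf2W⟩, ?_⟩
    have hDa : ∀ (r : Fin 3 → ℂ) (i : Fin 3), D r i (f1 + f2) = D r i f1 + D r i f2 := by
      intro r i; simp [D]
    refine Prod.ext ?_ ?_ <;> funext i
    · show D p i (f1 + f2) = u i
      rw [hDa, hf1p, hf2p, add_zero]
    · show D q i (f1 + f2) = v i
      rw [hDa, hf1q, hf2q, zero_add]
  refine ⟨(LinearMap.ker L).map W6.subtype, ?_, ?_⟩
  · ext f
    simp only [Submodule.map_coe, Set.mem_image, SetLike.mem_coe, Set.mem_setOf_eq]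
    constructor
    · rintro ⟨⟨g, hgW⟩, hgker, rfl⟩
      have h1 := congrArg Prod.fst (LinearMap.mem_ker.1 hgker)
      have h2 := congrArg Prod.snd (LinearMap.mem_ker.1 hgker)
      exact ⟨hgW, fun i => congr_fun h1 i, fun i => congr_fun h2 i⟩
    · rintro ⟨hfW, hfp, hfq⟩
      refine ⟨⟨f, hfW⟩, LinearMap.mem_ker.2 ?_, rfl⟩
      refine Prod.ext (funext fun i => ?_) (funext fun i => ?_)
      · exact hfp i
      · exact hfq i
  · rw [Submodule.finrank_map_subtype_eq]
    have hrk := LinearMap.finrank_range_add_finrank_ker L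
    rw [finrank_W6, LinearMap.range_eq_top.2 hsurj, finrank_top] at hrk
    have hcod : Module.finrank ℂ ((Fin 3 → ℂ) × (Fin 3 → ℂ)) = 6 := by
      simp [Module.finrank_prod]
    omega

end
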